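/- Suppose f(y) > 0 for all y ∈ Y. Let P and Q be real numbers with P ≥ p* (an upper bound on p*) and 0 < Q ≤ q* (a positive lower bound on q*). If α > P/Q, then α > p*/q*; hence any α exceeding the ratio of an upper bound on p* to a positive lower bound on q* satisfies the consistency condition, and the minimum of the loss L over Y equals p*. -/
import Mathlib


/-- If `P ≥ p*` and `0 < Q ≤ q*`, then any `α > P/Q` satisfies `α > p*/q*`,
and hence the minimum of the loss `L` over `Y` equals `p*`. -/
theorem cmpe_bounds_give_consistency {Y : Type*} [Fintype Y] [Nonempty Y]
    (f g : Y → ℝ) (α : ℝ)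
    (hfeas : (Finset.univ.filter (fun y => g y ≤ 0)).Nonempty)
    (hinfeas : (Finset.univ.filter (fun y => 0 < g y)).Nonempty)
    (hf : ∀ y, 0 < f y)
    (pstar qstar : ℝ)
    (hp : pstar = (Finset.univ.filter (fun y => g y ≤ 0)).inf' hfeas f)
    (hq : qstar = (Finset.univ.filter (fun y => 0 < g y)).inf' hinfeas (fun y => f y + g y))
    (P Q : ℝ) (hP : P ≥ pstar) (hQpos : 0 < Q) (hQ : Q ≤ qstar)
    (hα : α > P / Q)
    (L : Y → ℝ)
    (hL : ∀ y, L y = if g y ≤ 0 then f y else α * (f y + g y)) :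
    α > pstar / qstar ∧ Finset.univ.inf' Finset.univ_nonempty L = pstar := by
  have hqpos : 0 < qstar := lt_of_lt_of_le hQpos hQ
  -- p* > 0
  obtain ⟨y0, hy0⟩ := Finset.exists_mem_eq_inf' hfeas f
  have hy0mem := hy0.1
  have hpval : pstar = f y0 := by rw [hp, hy0.2]
  have hppos : 0 < pstar := hpval ▸ hf y0
  have hPpos : 0 < P := lt_of_lt_of_le hppos hP
  have h1 : pstar / qstar ≤ P / Q := by
    calc pstar / qstar ≤ P / qstar := by gcongr
        _ ≤ P / Q := by gcongr
  have hcons : α > pstar / qstar := lt_of_le_of_lt h1 hα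
  refine ⟨hcons, ?_⟩
  have hαpos : 0 < α := lt_of_le_of_lt (div_nonneg hppos.le hqpos.le) hcons
  -- lower bound: p* ≤ L y for all y
  have hlow : ∀ y, pstar ≤ L y := by
    intro y
    rw [hL y]
    by_cases hgy : g y ≤ 0
    · simp only [if_pos hgy]
      rw [hp]
      exact Finset.inf'_le f (by simp [hgy])
    · simp only [if_neg hgy]
      push_neg at hgy
      have hfg : qstar ≤ f y + g y := by
        rw [hq]
        exact Finset.inf'_le _ (by simp [hgy])
      have : pstar < α * qstar := by
        have := (div_lt_iff₀ hqpos).mp (gt_iff_lt.mp hcons)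
        linarith
      have : α * qstar ≤ α * (f y + g y) := by
        exact mul_le_mul_of_nonneg_left hfg hαpos.le
      linarith
  refine le_antisymm ?_ (Finset.le_inf' _ _ (fun y _ => hlow y))
  have hgy0 : g y0 ≤ 0 := by simpa using hy0mem
  have : L y0 = pstar := by rw [hL y0, if_pos hgy0, hpval]
  calc Finset.univ.inf' Finset.univ_nonempty L ≤ L y0 :=
        Finset.inf'_le L (Finset.mem_univ y0)
    _ = pstar := this
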